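/- Let (p_n) be a sequence of edge probabilities with n·p_n → 0, let G = G(n, p_n) be the Erdős–Rényi random graph, and let X_0 be an independent uniformly random 3-coloring of its vertices. Then the probability that the 3-color CCA trajectory synchronizes on every connected component of G tends to 1 as n → ∞. -/

import Mathlib

noncomputable section
attribute [local instance] Classical.propDecidable

open Filter MeasureTheory

/-- One step of the 3-color cyclic cellular automaton. -/
def ccaStep {V : Type*} (G : SimpleGraph V) (X : V → ZMod 3) : V → ZMod 3 :=
  fun v => if ∃ u, G.Adj v u ∧ X u = X v + 1 then X v + 1 else X v

/-- The CCA trajectory started from `X₀`. -/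
def ccaTraj {V : Type*} (G : SimpleGraph V) (X₀ : V → ZMod 3) : ℕ → V → ZMod 3 :=
  fun t => (ccaStep G)^[t] X₀

/-- A vertex is excited at time `t` for CCA iff its color advances. -/
def ccaExcited {V : Type*} (G : SimpleGraph V) (X₀ : V → ZMod 3) (t : ℕ) (v : V) : Prop :=
  ccaTraj G X₀ (t + 1) v = ccaTraj G X₀ t v + 1

/-- Number of excitations of `x` at times `0, …, t-1` (CCA). -/
def ccaNe {V : Type*} (G : SimpleGraph V) (X₀ : V → ZMod 3) (t : ℕ) (x : V) : ℕ :=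
  ((Finset.range t).filter fun s => ccaExcited G X₀ s x).card

/-- The random graph on `Fin n` determined by the edge indicators `ω`. -/
def erGraph (n : ℕ) (ω : Sym2 (Fin n) → Bool) : SimpleGraph (Fin n) :=
  SimpleGraph.fromEdgeSet {e : Sym2 (Fin n) | ω e = true}

namespace CCAAux

/-- Integer lift of the difference of two colors, in `{-1,0,1}`. -/
def kap (a b : ZMod 3) : ℤ := if b - a = 1 then 1 else if b - a = 2 then -1 else 0

lemma kap_mem (a b : ZMod 3) : kap a b = -1 ∨ kap a b = 0 ∨ kap a b = 1 := by
  unfold kap; split <;> [skip; split] <;> simp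

lemma kap_antisymm (a b : ZMod 3) : kap b a = - kap a b := by
  revert a b; decide

lemma kap_eq_one_iff (a b : ZMod 3) : kap a b = 1 ↔ b = a + 1 := by
  revert a b; decide

lemma kap_eq_neg_one_iff (a b : ZMod 3) : kap a b = -1 ↔ a = b + 1 := by
  revert a b; decide

lemma kap_eq_zero_iff (a b : ZMod 3) : kap a b = 0 ↔ a = b := by
  revert a b; decide

variable {V : Type*} {G : SimpleGraph V}

/-- Lift of a coloring summed along a walk. -/
def wlift (X : V → ZMod 3) : {u v : V} → G.Walk u v → ℤ
  | _, _, .nil => 0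
  | _, _, @SimpleGraph.Walk.cons _ _ a b _ _ q => kap (X a) (X b) + wlift X q

@[simp] lemma wlift_nil (X : V → ZMod 3) {u : V} : wlift X (.nil : G.Walk u u) = 0 := rfl

@[simp] lemma wlift_cons (X : V → ZMod 3) {u b v : V} (h : G.Adj u b) (q : G.Walk b v) :
    wlift X (.cons h q) = kap (X u) (X b) + wlift X q := rfl

lemma wlift_append (X : V → ZMod 3) {u v w : V} (p : G.Walk u v) (q : G.Walk v w) :
    wlift X (p.append q) = wlift X p + wlift X q := by
  induction p with
  | nil => simp
  | cons h p ih => simp [ih]; ring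

lemma wlift_bypass [DecidableEq V] (hac : G.IsAcyclic) (X : V → ZMod 3) {u v : V}
    (p : G.Walk u v) : wlift X p.bypass = wlift X p := by
  induction p with
  | nil => simp [SimpleGraph.Walk.bypass]
  | @cons u b v h p ih =>
    rw [SimpleGraph.Walk.bypass]
    split_ifs with hs
    · -- bypass = p.bypass.dropUntil u hs
      have hsp : (p.bypass.takeUntil u hs).append (p.bypass.dropUntil u hs) = p.bypass :=
        SimpleGraph.Walk.take_spec _ hs
      have htake : wlift X (p.bypass.takeUntil u hs) = kap (X b) (X u) := by
        have hpath1 : (p.bypass.takeUntil u hs).IsPath :=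
          (SimpleGraph.Walk.bypass_isPath p).takeUntil hs
        have hpath2 : (SimpleGraph.Walk.cons h.symm .nil : G.Walk b u).IsPath := by
          simp [SimpleGraph.Walk.isPath_def, h.ne']
        have := SimpleGraph.isAcyclic_iff_path_unique.mp hac ⟨_, hpath1⟩ ⟨_, hpath2⟩
        have heq : (p.bypass.takeUntil u hs) = (SimpleGraph.Walk.cons h.symm .nil) :=
          congrArg Subtype.val this
        rw [heq]; simp
      have := congrArg (wlift X) hsp
      rw [wlift_append, htake] at this
      rw [wlift_cons, ← ih, ← this, kap_antisymm]
      ring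
    · rw [wlift_cons, wlift_cons, ih]

lemma wlift_eq [DecidableEq V] (hac : G.IsAcyclic) (X : V → ZMod 3) {u v : V}
    (p q : G.Walk u v) : wlift X p = wlift X q := by
  have hp := wlift_bypass hac X p
  have hq := wlift_bypass hac X q
  have : p.bypass = q.bypass := by
    have := SimpleGraph.isAcyclic_iff_path_unique.mp hac
      ⟨p.bypass, SimpleGraph.Walk.bypass_isPath p⟩ ⟨q.bypass, SimpleGraph.Walk.bypass_isPath q⟩
    exact congrArg Subtype.val this
  rw [← hp, ← hq, this]

end CCAAux

namespace CCAAux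

variable {V : Type*} {G : SimpleGraph V}

lemma traj_succ (G : SimpleGraph V) (X₀ : V → ZMod 3) (t : ℕ) :
    ccaTraj G X₀ (t + 1) = ccaStep G (ccaTraj G X₀ t) := by
  simp [ccaTraj, Function.iterate_succ_apply']

lemma zmod3_ne_self_add_one (a : ZMod 3) : a ≠ a + 1 := by revert a; decide

lemma excited_iff (X₀ : V → ZMod 3) (t : ℕ) (v : V) :
    ccaExcited G X₀ t v ↔ ∃ u, G.Adj v u ∧ ccaTraj G X₀ t u = ccaTraj G X₀ t v + 1 := by
  unfold ccaExcited
  rw [traj_succ]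
  unfold ccaStep
  split_ifs with h
  · simp [h]
  · simpa [h] using zmod3_ne_self_add_one (ccaTraj G X₀ t v)

lemma traj_succ_eq (X₀ : V → ZMod 3) (t : ℕ) (v : V) :
    ccaTraj G X₀ (t + 1) v = ccaTraj G X₀ t v + (if ccaExcited G X₀ t v then 1 else 0) := by
  by_cases h : ccaExcited G X₀ t v
  · rw [if_pos h]; exact h
  · rw [if_neg h, add_zero]
    unfold ccaExcited at h
    rw [traj_succ] at h ⊢
    unfold ccaStep at h ⊢
    split_ifs at h ⊢ with h2
    · exact absurd rfl h
    · rfl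

lemma ne_succ (X₀ : V → ZMod 3) (t : ℕ) (v : V) :
    ccaNe G X₀ (t + 1) v = ccaNe G X₀ t v + (if ccaExcited G X₀ t v then 1 else 0) := by
  unfold ccaNe
  rw [Finset.range_add_one, Finset.filter_insert]
  split_ifs with h
  · rw [Finset.card_insert_of_notMem (by simp)]
  · simp

/-- The initial height lift, rooted at `x`. -/
def h0 (X₀ : V → ZMod 3) (x v : V) : ℤ :=
  if h : G.Reachable x v then wlift X₀ h.some else 0

/-- The height at time `t`. -/
def Ht (G : SimpleGraph V) (X₀ : V → ZMod 3) (x : V) (t : ℕ) (v : V) : ℤ :=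
  h0 (G := G) X₀ x v + (ccaNe G X₀ t v : ℤ)

lemma Ht_succ (X₀ : V → ZMod 3) (x : V) (t : ℕ) (v : V) :
    Ht G X₀ x (t + 1) v = Ht G X₀ x t v + (if ccaExcited G X₀ t v then 1 else 0) := by
  unfold Ht
  rw [ne_succ]
  push_cast
  split_ifs <;> ring

lemma h0_adj [DecidableEq V] (hac : G.IsAcyclic) (X₀ : V → ZMod 3) {x u v : V}
    (hr : G.Reachable x u) (h : G.Adj u v) :
    h0 (G := G) X₀ x v = h0 (G := G) X₀ x u + kap (X₀ u) (X₀ v) := by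
  have hrv : G.Reachable x v := hr.trans ⟨.cons h .nil⟩
  unfold h0
  rw [dif_pos hr, dif_pos hrv]
  have := wlift_eq hac X₀ hrv.some (hr.some.append (.cons h .nil))
  rw [this, wlift_append]
  simp [add_comm]

/-- Main invariant: the height difference across an edge equals the lift of
the color difference, for all time. -/
lemma key [DecidableEq V] (hac : G.IsAcyclic) (X₀ : V → ZMod 3) (x : V) :
    ∀ t, ∀ u v, G.Reachable x u → G.Adj u v →
      Ht G X₀ x t v - Ht G X₀ x t u = kap (ccaTraj G X₀ t u) (ccaTraj G X₀ t v) := by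
  intro t
  induction t with
  | zero =>
    intro u v hr h
    have h0a := h0_adj hac X₀ hr h
    unfold Ht
    have : ccaNe G X₀ 0 u = 0 := by simp [ccaNe]
    have h2 : ccaNe G X₀ 0 v = 0 := by simp [ccaNe]
    rw [this, h2, h0a]
    simp [ccaTraj]
  | succ t ih =>
    intro u v hr h
    have IH := ih u v hr h
    set a := ccaTraj G X₀ t u with ha
    set b := ccaTraj G X₀ t v with hb
    have hu1 : a = b + 1 → ccaExcited G X₀ t v := fun hab =>
      (excited_iff X₀ t v).mpr ⟨u, h.symm, by rw [← ha, ← hb, hab]⟩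
    have hv1 : b = a + 1 → ccaExcited G X₀ t u := fun hab =>
      (excited_iff X₀ t u).mpr ⟨v, h, by rw [← ha, ← hb, hab]⟩
    have hsh : ∀ a b : ZMod 3, kap (a+1) (b+1) = kap a b := by decide
    have hsh2 : ∀ a b : ZMod 3, kap a b ≠ -1 → kap (a+1) b = kap a b - 1 := by decide
    have hsh3 : ∀ a b : ZMod 3, kap a b ≠ 1 → kap a (b+1) = kap a b + 1 := by decide
    rw [Ht_succ, Ht_succ, traj_succ_eq, traj_succ_eq, ← ha, ← hb]
    by_cases heu : ccaExcited G X₀ t u <;> by_cases hev : ccaExcited G X₀ t v <;>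
      simp only [heu, hev, if_true, if_false, add_zero]
    · rw [hsh a b]; linarith [IH]
    · have hne : kap a b ≠ -1 := fun hm => hev (hu1 ((kap_eq_neg_one_iff a b).mp hm))
      rw [hsh2 a b hne]; linarith [IH]
    · have hne : kap a b ≠ 1 := fun hm => heu (hv1 ((kap_eq_one_iff a b).mp hm))
      rw [hsh3 a b hne]; linarith [IH]
    · exact IH

theorem acyclic_sync {V : Type*} [Fintype V] (G : SimpleGraph V) (hac : G.IsAcyclic)
    (X₀ : V → ZMod 3) (x y : V) (hxy : G.Reachable x y) :
    ∃ N : ℕ, ∀ t ≥ N, ccaTraj G X₀ t x = ccaTraj G X₀ t y := by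
  classical
  set C : Finset V := Finset.univ.filter (fun v => G.Reachable x v) with hCdef
  have hmemC : ∀ {v}, v ∈ C ↔ G.Reachable x v := by intro v; simp [hCdef]
  have hxC : x ∈ C := hmemC.mpr (SimpleGraph.Reachable.refl x)
  have hCadj : ∀ {u v}, u ∈ C → G.Adj u v → v ∈ C := by
    intro u v hu h
    exact hmemC.mpr ((hmemC.mp hu).trans ⟨.cons h .nil⟩)
  have hCne : (C.image (Ht G X₀ x 0)).Nonempty := ⟨_, Finset.mem_image_of_mem _ hxC⟩
  set M : ℤ := (C.image (Ht G X₀ x 0)).max' hCne with hMdef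
  -- heights in the component never exceed M
  have hle : ∀ t, ∀ v ∈ C, Ht G X₀ x t v ≤ M := by
    intro t
    induction t with
    | zero => intro v hv; exact Finset.le_max' _ _ (Finset.mem_image_of_mem _ hv)
    | succ t ih =>
      intro v hv
      rw [Ht_succ]
      by_cases he : ccaExcited G X₀ t v
      · obtain ⟨w, hw, hcol⟩ := (excited_iff X₀ t v).mp he
        have hkw : Ht G X₀ x t w - Ht G X₀ x t v = 1 := by
          rw [key hac X₀ x t v w (hmemC.mp hv) hw]
          exact (kap_eq_one_iff _ _).mpr hcol
        have : Ht G X₀ x t w ≤ M := ih w (hCadj hv hw)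
        rw [if_pos he]; omega
      · rw [if_neg he]; have := ih v hv; omega
  set S : ℕ → Finset V := fun t => C.filter (fun v => Ht G X₀ x t v = M) with hSdef
  have hSsub : ∀ t, S t ⊆ C := fun t => Finset.filter_subset _ _
  have hmemS : ∀ {t v}, v ∈ S t ↔ v ∈ C ∧ Ht G X₀ x t v = M := by
    intro t v; simp [hSdef]
  have hmono : ∀ t, S t ⊆ S (t + 1) := by
    intro t v hv
    obtain ⟨hvC, hvM⟩ := hmemS.mp hv
    have hnle := hle (t + 1) v hvC
    rw [Ht_succ] at hnle
    have hne2 : ¬ ccaExcited G X₀ t v := by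
      intro he; rw [if_pos he] at hnle; omega
    exact hmemS.mpr ⟨hvC, by rw [Ht_succ, if_neg hne2]; omega⟩
  have hS0 : (S 0).Nonempty := by
    have := Finset.max'_mem _ hCne
    rw [← hMdef, Finset.mem_image] at this
    obtain ⟨v, hv, hvM⟩ := this
    exact ⟨v, hmemS.mpr ⟨hv, hvM⟩⟩
  have hSne : ∀ t, (S t).Nonempty := by
    intro t
    induction t with
    | zero => exact hS0
    | succ t ih => exact ih.mono (hmono t)
  -- boundary edge lemma
  have hbdry : ∀ t, ∀ (a b : V) (w : G.Walk a b), a ∈ S t → b ∉ S t →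
      ∃ u v, u ∈ S t ∧ G.Adj u v ∧ v ∉ S t := by
    intro t a b w
    induction w with
    | nil => intro ha hb; exact absurd ha hb
    | @cons a c b h p ih =>
      intro ha hb
      by_cases hc : c ∈ S t
      · exact ih hc hb
      · exact ⟨a, c, ha, h, hc⟩
  have hgrow : ∀ t, S t ≠ C → (S t).card < (S (t + 1)).card := by
    intro t hne
    obtain ⟨b, hbC, hbS⟩ : ∃ b ∈ C, b ∉ S t := by
      by_contra hcon
      push_neg at hcon
      exact hne (Finset.Subset.antisymm (hSsub t) hcon)
    obtain ⟨a, haS⟩ := hSne t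
    have hreach : G.Reachable a b := ((hmemC.mp ((hSsub t) haS)).symm.trans (hmemC.mp hbC))
    obtain ⟨u, v, huS, huv, hvS⟩ := hbdry t a b hreach.some haS hbS
    obtain ⟨huC, huM⟩ := hmemS.mp huS
    have hvC : v ∈ C := hCadj huC huv
    have hkuv := key hac X₀ x t u v (hmemC.mp huC) huv
    have hvle := hle t v hvC
    have hvne : Ht G X₀ x t v ≠ M := fun hh => hvS (hmemS.mpr ⟨hvC, hh⟩)
    rcases kap_mem (ccaTraj G X₀ t u) (ccaTraj G X₀ t v) with hk | hk | hk
    · -- v is one below u, so v is excited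
      have hcol := (kap_eq_neg_one_iff _ _).mp hk
      have hev : ccaExcited G X₀ t v := (excited_iff X₀ t v).mpr ⟨u, huv.symm, hcol⟩
      have hvnew : v ∈ S (t + 1) := by
        refine hmemS.mpr ⟨hvC, ?_⟩
        rw [Ht_succ, if_pos hev]
        omega
      exact Finset.card_lt_card ⟨hmono t, fun hsub => hvS (hsub hvnew)⟩
    · rw [hk] at hkuv; omega
    · rw [hk] at hkuv; omega
  -- the set of maximal vertices fills the component
  have hcard : ∀ t, min C.card (t + 1) ≤ (S t).card := by
    intro t
    induction t with
    | zero => have := Finset.card_pos.mpr (hSne 0); omega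
    | succ t ih =>
      by_cases he : S t = C
      · have h1 : C ⊆ S (t + 1) := he ▸ hmono t
        have := Finset.card_le_card h1
        omega
      · have := hgrow t he
        omega
  have hfull : ∀ t ≥ C.card, ∀ v ∈ C, Ht G X₀ x t v = M := by
    intro t ht v hv
    have h1 := hcard t
    have h2 := Finset.card_le_card (hSsub t)
    have h3 : C.card ≤ (S t).card := by omega
    have : S t = C := Finset.eq_of_subset_of_card_le (hSsub t) h3
    exact (hmemS.mp (this ▸ hv)).2
  -- conclusion: colors agree along walks within the component
  refine ⟨C.card, fun t ht => ?_⟩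
  have hchain : ∀ (a b : V) (w : G.Walk a b), a ∈ C → ccaTraj G X₀ t a = ccaTraj G X₀ t b := by
    intro a b w
    induction w with
    | nil => intro _; rfl
    | @cons a c b h p ih =>
      intro ha
      have hcC : c ∈ C := hCadj ha h
      have hk := key hac X₀ x t a c (hmemC.mp ha) h
      rw [hfull t ht a ha, hfull t ht c hcC] at hk
      have : kap (ccaTraj G X₀ t a) (ccaTraj G X₀ t c) = 0 := by omega
      rw [(kap_eq_zero_iff _ _).mp this]
      exact ih hcC
  exact hchain x y hxy.some hxC

end CCAAux


namespace CCAAux2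

open SimpleGraph

lemma getVert_eq_support_getElem {V : Type*} {G : SimpleGraph V} {u v : V} (p : G.Walk u v) :
    ∀ i : ℕ, (hi : i ≤ p.length) →
      p.getVert i = p.support[i]'(by rw [SimpleGraph.Walk.length_support]; omega) := by
  induction p with
  | nil =>
    intro i hi
    have : i = 0 := by simpa using hi
    subst this
    simp [SimpleGraph.Walk.getVert]
  | cons h q ih =>
    intro i hi
    cases i with
    | zero => simp [SimpleGraph.Walk.getVert]
    | succ j =>
      simp only [SimpleGraph.Walk.getVert_cons_succ, SimpleGraph.Walk.support_cons,
        List.getElem_cons_succ]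
      exact ih j (by simpa [Nat.succ_le_iff] using hi)

/-- Cyclic successor on `Fin k`. -/
def fsucc {k : ℕ} (i : Fin k) : Fin k := ⟨(i.val + 1) % k, Nat.mod_lt _ i.pos⟩

lemma cycle_extract {n : ℕ} (G : SimpleGraph (Fin n)) (h : ¬ G.IsAcyclic) :
    ∃ k, 3 ≤ k ∧ k ≤ n ∧ ∃ f : Fin k → Fin n, Function.Injective f ∧
      ∀ i : Fin k, G.Adj (f i) (f (fsucc i)) := by
  unfold SimpleGraph.IsAcyclic at h
  push_neg at h
  obtain ⟨v, c, hc⟩ := h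
  set k := c.length with hk
  have h3 : 3 ≤ k := hc.three_le_length
  haveI : NeZero k := ⟨by omega⟩
  have hslen : c.support.length = k + 1 := SimpleGraph.Walk.length_support c
  have htlen : c.support.tail.length = k := by
    rw [List.length_tail, hslen]; omega
  set f : Fin k → Fin n := fun i => c.getVert (i.val + 1) with hfdef
  have hgv : ∀ i : Fin k, f i = c.support.tail[i.val]'(by omega) := by
    intro i
    rw [List.getElem_tail]
    exact getVert_eq_support_getElem c (i.val + 1) (by omega)
  have hinj : Function.Injective f := by
    intro i j hij
    rw [hgv i, hgv j] at hij
    exact Fin.ext ((List.Nodup.getElem_inj_iff hc.support_nodup).mp hij)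
  have hadj : ∀ i : Fin k, G.Adj (f i) (f (fsucc i)) := by
    intro i
    show G.Adj (c.getVert (i.val + 1)) (c.getVert ((fsucc i).val + 1))
    by_cases hcase : i.val + 1 < k
    · have hv : (fsucc i).val = i.val + 1 := Nat.mod_eq_of_lt hcase
      rw [hv]
      exact c.adj_getVert_succ (by omega)
    · have hik : i.val + 1 = k := by have := i.isLt; omega
      have hv : (fsucc i).val = 0 := by
        show (i.val + 1) % k = 0
        rw [hik]; exact Nat.mod_self k
      rw [hv, hik]
      have h1 : c.getVert k = v := SimpleGraph.Walk.getVert_length c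
      have h2 : c.getVert 0 = v := SimpleGraph.Walk.getVert_zero c
      have h4 := c.adj_getVert_succ (i := 0) (by omega : 0 < c.length)
      rw [h2] at h4
      rw [h1]
      simpa using h4
  exact ⟨k, h3, by simpa using Fintype.card_le_of_injective f hinj, f, hinj, hadj⟩

end CCAAux2

namespace CCAProb

open CCAAux2 in
abbrev Om (n : ℕ) := (Sym2 (Fin n) → Bool) × (Fin n → ZMod 3)

lemma allMeasurable {n : ℕ} (s : Set (Om n)) : MeasurableSet s :=
  s.toFinite.measurableSet

/-- The edges of the cycle traced by `f`. -/
def cycEdges {n k : ℕ} (f : Fin k → Fin n) : Finset (Sym2 (Fin n)) :=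
  Finset.univ.image (fun i => s(f i, f (CCAAux2.fsucc i)))

/-- The event that all edges of the cycle traced by `f` are present. -/
def cycEvent {n k : ℕ} (f : Fin k → Fin n) : Set (Om n) :=
  {ω | ∀ e ∈ cycEdges f, ω.1 e = true}

lemma cycEdges_card {n k : ℕ} (h3 : 3 ≤ k) (f : Fin k → Fin n)
    (hinj : Function.Injective f) : (cycEdges f).card = k := by
  have hmapinj : ∀ i j : Fin k, s(f i, f (CCAAux2.fsucc i)) = s(f j, f (CCAAux2.fsucc j)) → i = j := by
    intro i j hij
    rw [Sym2.eq_iff] at hij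
    rcases hij with ⟨h1, _⟩ | ⟨h1, h2⟩
    · exact hinj h1
    · have e1 : i = CCAAux2.fsucc j := hinj h1
      have e2 : CCAAux2.fsucc i = j := hinj h2
      have v1 : i.val = (j.val + 1) % k := congrArg Fin.val e1
      have v2 : (i.val + 1) % k = j.val := congrArg Fin.val e2
      have hik := i.isLt
      have hjk := j.isLt
      by_cases c1 : i.val + 1 < k <;> by_cases c2 : j.val + 1 < k
      · rw [Nat.mod_eq_of_lt c2] at v1
        rw [Nat.mod_eq_of_lt c1] at v2
        omega
      · have : j.val + 1 = k := by omega
        rw [this, Nat.mod_self] at v1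
        rw [Nat.mod_eq_of_lt c1] at v2
        omega
      · have : i.val + 1 = k := by omega
        rw [Nat.mod_eq_of_lt c2] at v1
        rw [this, Nat.mod_self] at v2
        omega
      · have hi1 : i.val + 1 = k := by omega
        have hj1 : j.val + 1 = k := by omega
        rw [hj1, Nat.mod_self] at v1
        omega
  rw [cycEdges, Finset.card_image_of_injective _ (fun i j => hmapinj i j)]
  simp


section
variable (p : ℕ → ℝ) (hp : ∀ n, 0 ≤ p n ∧ p n ≤ 1)
  (μ : ∀ n : ℕ, Measure (Om n))
  (hμ : ∀ (n : ℕ) (s : Finset (Sym2 (Fin n))) (c : Sym2 (Fin n) → Bool)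
      (u : Finset (Fin n)) (d : Fin n → ZMod 3),
    μ n {ω | (∀ e ∈ s, ω.1 e = c e) ∧ (∀ v ∈ u, ω.2 v = d v)} =
      (∏ e ∈ s, (if c e then ENNReal.ofReal (p n)
        else ENNReal.ofReal (1 - p n))) * (1 / 3 : ENNReal) ^ u.card)

include hμ in
lemma cycEvent_measure {n k : ℕ} (h3 : 3 ≤ k) (f : Fin k → Fin n)
    (hinj : Function.Injective f) :
    μ n (cycEvent f) = ENNReal.ofReal (p n) ^ k := by
  have := hμ n (cycEdges f) (fun _ => true) ∅ (fun _ => 0)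
  simp only [Finset.notMem_empty, false_implies, implies_true, and_true, if_true,
    Finset.card_empty, pow_zero, mul_one, Finset.prod_const] at this
  rw [cycEvent]
  rw [this, cycEdges_card h3 f hinj]

include hμ in
lemma bad_bound {n : ℕ} (hhalf : ENNReal.ofReal ((n : ℝ) * p n) ≤ 2⁻¹) :
    μ n {ω : Om n | ¬ (erGraph n ω.1).IsAcyclic} ≤
      2 * ENNReal.ofReal ((n : ℝ) * p n) ^ 3 := by
  classical
  set r : ENNReal := ENNReal.ofReal ((n : ℝ) * p n) with hr
  -- the union bound decomposition
  have hsub : {ω : Om n | ¬ (erGraph n ω.1).IsAcyclic} ⊆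
      ⋃ k ∈ Finset.Icc 3 n, ⋃ f ∈ (Finset.univ : Finset (Fin k → Fin n)).filter
        (fun f => Function.Injective f), cycEvent f := by
    intro ω hω
    obtain ⟨k, h3, hkn, f, hinj, hadj⟩ := CCAAux2.cycle_extract _ hω
    refine Set.mem_iUnion₂.mpr ⟨k, Finset.mem_Icc.mpr ⟨h3, hkn⟩, ?_⟩
    refine Set.mem_iUnion₂.mpr ⟨f, Finset.mem_filter.mpr ⟨Finset.mem_univ _, hinj⟩, ?_⟩
    intro e he
    rw [cycEdges, Finset.mem_image] at he
    obtain ⟨i, _, rfl⟩ := he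
    have := hadj i
    rw [erGraph, SimpleGraph.fromEdgeSet_adj] at this
    exact this.1
  calc μ n {ω : Om n | ¬ (erGraph n ω.1).IsAcyclic}
      ≤ μ n (⋃ k ∈ Finset.Icc 3 n, ⋃ f ∈ (Finset.univ : Finset (Fin k → Fin n)).filter
          (fun f => Function.Injective f), cycEvent f) := measure_mono hsub
    _ ≤ ∑ k ∈ Finset.Icc 3 n, μ n (⋃ f ∈ (Finset.univ : Finset (Fin k → Fin n)).filter
          (fun f => Function.Injective f), cycEvent f) := measure_biUnion_finset_le _ _
    _ ≤ ∑ k ∈ Finset.Icc 3 n, ∑ f ∈ (Finset.univ : Finset (Fin k → Fin n)).filter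
          (fun f => Function.Injective f), μ n (cycEvent f) :=
        Finset.sum_le_sum (fun k _ => measure_biUnion_finset_le _ _)
    _ ≤ ∑ k ∈ Finset.Icc 3 n, (n : ENNReal) ^ k * ENNReal.ofReal (p n) ^ k := by
        refine Finset.sum_le_sum (fun k hk => ?_)
        have h3 : 3 ≤ k := (Finset.mem_Icc.mp hk).1
        have heach : ∀ f ∈ (Finset.univ : Finset (Fin k → Fin n)).filter
            (fun f => Function.Injective f), μ n (cycEvent f) = ENNReal.ofReal (p n) ^ k := by
          intro f hf
          exact cycEvent_measure p μ hμ h3 f (Finset.mem_filter.mp hf).2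
        rw [Finset.sum_congr rfl heach, Finset.sum_const, nsmul_eq_mul]
        refine mul_le_mul_left ?_ _
        have hcard : ((Finset.univ : Finset (Fin k → Fin n)).filter
            (fun f => Function.Injective f)).card ≤ n ^ k := by
          calc _ ≤ (Finset.univ : Finset (Fin k → Fin n)).card := Finset.card_filter_le _ _
            _ = n ^ k := by rw [Finset.card_univ, Fintype.card_fun]; simp
        calc ((((Finset.univ : Finset (Fin k → Fin n)).filter
              (fun f => Function.Injective f)).card : ℕ) : ENNReal)
            ≤ ((n ^ k : ℕ) : ENNReal) := by exact_mod_cast Nat.cast_le.mpr hcard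
          _ = (n : ENNReal) ^ k := by push_cast; ring
    _ = ∑ k ∈ Finset.Icc 3 n, r ^ k := by
        refine Finset.sum_congr rfl (fun k _ => ?_)
        rw [hr, ENNReal.ofReal_mul (by positivity), ENNReal.ofReal_natCast, mul_pow]
    _ ≤ ∑ k ∈ Finset.Icc 3 n, r ^ 3 * (2⁻¹ : ENNReal) ^ (k - 3) := by
        refine Finset.sum_le_sum (fun k hk => ?_)
        have h3 : 3 ≤ k := (Finset.mem_Icc.mp hk).1
        have : r ^ k = r ^ 3 * r ^ (k - 3) := by
          rw [← pow_add]; congr 1; omega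
        rw [this]
        exact mul_le_mul_right (pow_le_pow_left₀ zero_le hhalf _) _
    _ = r ^ 3 * ∑ k ∈ Finset.Icc 3 n, (2⁻¹ : ENNReal) ^ (k - 3) := by
        rw [Finset.mul_sum]
    _ ≤ r ^ 3 * 2 := by
        refine mul_le_mul_right ?_ _
        have himg : ∑ j ∈ (Finset.Icc 3 n).image (fun k => k - 3), (2⁻¹ : ENNReal) ^ j =
            ∑ k ∈ Finset.Icc 3 n, (2⁻¹ : ENNReal) ^ (k - 3) := by
          apply Finset.sum_image
          intro x hx y hy hxy
          simp only [Finset.mem_coe, Finset.mem_Icc] at hx hy hxy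
          omega
        rw [← himg]
        refine le_trans (ENNReal.sum_le_tsum _) ?_
        rw [ENNReal.tsum_geometric]
        norm_num
    _ = 2 * r ^ 3 := by rw [mul_comm]

end

end CCAProb

/-- If `n·p_n → 0`, then a.a.s. the 3-color CCA with uniformly random initial coloring
synchronizes on every connected component of the Erdős–Rényi graph `G(n, p_n)`. -/
theorem cca_synchronizes_on_subcritical_er
    (p : ℕ → ℝ) (hp : ∀ n, 0 ≤ p n ∧ p n ≤ 1)
    (hlim : Tendsto (fun n : ℕ => (n : ℝ) * p n) atTop (nhds 0))
    (μ : ∀ n : ℕ, Measure ((Sym2 (Fin n) → Bool) × (Fin n → ZMod 3)))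
    (hprob : ∀ n, IsProbabilityMeasure (μ n))
    (hμ : ∀ (n : ℕ) (s : Finset (Sym2 (Fin n))) (c : Sym2 (Fin n) → Bool)
        (u : Finset (Fin n)) (d : Fin n → ZMod 3),
      μ n {ω | (∀ e ∈ s, ω.1 e = c e) ∧ (∀ v ∈ u, ω.2 v = d v)} =
        (∏ e ∈ s, (if c e then ENNReal.ofReal (p n)
          else ENNReal.ofReal (1 - p n))) * (1 / 3 : ENNReal) ^ u.card) :
    Tendsto (fun n : ℕ =>
      μ n {ω | ∀ x y : Fin n, (erGraph n ω.1).Reachable x y →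
        ∃ N : ℕ, ∀ t ≥ N,
          ccaTraj (erGraph n ω.1) ω.2 t x = ccaTraj (erGraph n ω.1) ω.2 t y})
      atTop (nhds (1 : ENNReal)) := by
  classical
  have hdet : ∀ (n : ℕ) (ω : (Sym2 (Fin n) → Bool) × (Fin n → ZMod 3)),
      (erGraph n ω.1).IsAcyclic →
      ω ∈ {ω : (Sym2 (Fin n) → Bool) × (Fin n → ZMod 3) |
        ∀ x y : Fin n, (erGraph n ω.1).Reachable x y →
        ∃ N : ℕ, ∀ t ≥ N,
          ccaTraj (erGraph n ω.1) ω.2 t x = ccaTraj (erGraph n ω.1) ω.2 t y} :=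
    fun n ω hac x y hxy => CCAAux.acyclic_sync _ hac ω.2 x y hxy
  set S : ∀ n : ℕ, Set ((Sym2 (Fin n) → Bool) × (Fin n → ZMod 3)) :=
    fun n => {ω | ∀ x y : Fin n, (erGraph n ω.1).Reachable x y →
      ∃ N : ℕ, ∀ t ≥ N,
        ccaTraj (erGraph n ω.1) ω.2 t x = ccaTraj (erGraph n ω.1) ω.2 t y} with hS
  have hcompl : ∀ n, (S n)ᶜ ⊆ {ω : CCAProb.Om n | ¬ (erGraph n ω.1).IsAcyclic} := by
    intro n ω hω
    exact fun hac => hω (hdet n ω hac)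
  have hhalfev : ∀ᶠ n : ℕ in atTop, (n : ℝ) * p n ≤ 1 / 2 :=
    hlim.eventually (eventually_le_nhds (show (0:ℝ) < 1/2 by norm_num))
  have hbad0 : Tendsto (fun n => μ n ((S n)ᶜ)) atTop (nhds 0) := by
    have h1 : Tendsto (fun n : ℕ => ENNReal.ofReal ((n : ℝ) * p n)) atTop (nhds 0) := by
      have := ENNReal.tendsto_ofReal hlim
      rwa [ENNReal.ofReal_zero] at this
    have h2 : Tendsto (fun n : ℕ => ENNReal.ofReal ((n : ℝ) * p n) ^ 3) atTop (nhds 0) := by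
      have := ENNReal.Tendsto.pow (n := 3) h1
      simpa using this
    have h3 : Tendsto (fun n : ℕ => 2 * ENNReal.ofReal ((n : ℝ) * p n) ^ 3) atTop (nhds 0) := by
      have := ENNReal.Tendsto.const_mul (a := 2) h2 (Or.inr (by norm_num))
      simpa using this
    refine tendsto_of_tendsto_of_tendsto_of_le_of_le' tendsto_const_nhds h3
      (Filter.Eventually.of_forall (fun n => zero_le)) ?_
    filter_upwards [hhalfev] with n hn
    have hhalf : ENNReal.ofReal ((n : ℝ) * p n) ≤ 2⁻¹ := by
      calc ENNReal.ofReal ((n : ℝ) * p n) ≤ ENNReal.ofReal (1 / 2 : ℝ) :=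
            ENNReal.ofReal_le_ofReal hn
        _ = 2⁻¹ := by
            rw [show (1 / 2 : ℝ) = (2 : ℝ)⁻¹ by norm_num,
              ENNReal.ofReal_inv_of_pos (by norm_num)]
            norm_num
    calc μ n ((S n)ᶜ) ≤ μ n {ω : CCAProb.Om n | ¬ (erGraph n ω.1).IsAcyclic} :=
          measure_mono (hcompl n)
      _ ≤ 2 * ENNReal.ofReal ((n : ℝ) * p n) ^ 3 := CCAProb.bad_bound p μ hμ hhalf
  have heq : ∀ n, μ n (S n) = 1 - μ n ((S n)ᶜ) := by
    intro n
    haveI := hprob n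
    rw [← prob_compl_eq_one_sub (CCAProb.allMeasurable _), compl_compl]
  have hfinal : Tendsto (fun n => 1 - μ n ((S n)ᶜ)) atTop (nhds 1) := by
    have := ENNReal.Tendsto.sub (a := 1) (b := 0)
      (tendsto_const_nhds : Tendsto (fun _ : ℕ => (1 : ENNReal)) atTop (nhds 1)) hbad0
      (Or.inl ENNReal.one_ne_top)
    simpa using this
  exact hfinal.congr (fun n => (heq n).symm)
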